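/- Let K be an odd positive integer, ε ≥ 0, Δ ∈ [0,1), m ≥ 0 a real number, and γ : {0,…,K} → [0,1] arbitrary. Define the privacy cost objective f(p, p'; γ) = Σ_{l=0}^{(K−1)/2} ( e^{mε} α_l(p') − α_l(p) ) γ(l) + Σ_{l=(K+1)/2}^{K} ( α_l(p) − e^{mε} α_l(p') ) γ(l) for p, p' ∈ [0,1]^K. Let C(ε,Δ) = { (0,0), (1,1), (0,Δ), (Δ,0), (1−Δ,1), (1,1−Δ), ((e^ε+Δ)/(e^ε+1), (1−Δ)/(e^ε+1)), ((1−Δ)/(e^ε+1), (e^ε+Δ)/(e^ε+1)) }. Then for every p, p' ∈ [0,1]^K with (p_i, p_i') ∈ F(ε,Δ) for all i, there exist q, q' ∈ [0,1]^K with (q_i, q_i') ∈ C(ε,Δ) for all i such that f(p, p'; γ) ≤ f(q, q'; γ). That is, the maximum of f over the product of feasible regions is attained at a point where every coordinate pair lies among the eight listed corner points. -/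

import Mathlib

open Finset

/-- Poisson–Binomial probability mass at `l` for parameters `p : Fin K → ℝ`. -/
noncomputable def alphaPB (K : ℕ) (p : Fin K → ℝ) (l : ℕ) : ℝ :=
  ∑ A ∈ Finset.powersetCard l (Finset.univ : Finset (Fin K)),
    (∏ i ∈ A, p i) * ∏ j ∈ Aᶜ, (1 - p j)

/-- The feasible region `F(ε,Δ)`: pairs `(p,p') ∈ [0,1]²` consistent with
`(ε,Δ)`-differential privacy. -/
def Feas (ε Δ p p' : ℝ) : Prop :=
  0 ≤ p ∧ p ≤ 1 ∧ 0 ≤ p' ∧ p' ≤ 1 ∧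
  p ≤ Real.exp ε * p' + Δ ∧ p' ≤ Real.exp ε * p + Δ ∧
  1 - p ≤ Real.exp ε * (1 - p') + Δ ∧ 1 - p' ≤ Real.exp ε * (1 - p) + Δ

/-- The eight corner points of the feasible region `F(ε,Δ)`. -/
noncomputable def Corners (ε Δ : ℝ) : Set (ℝ × ℝ) :=
  {(0, 0), (1, 1), (0, Δ), (Δ, 0), (1 - Δ, 1), (1, 1 - Δ),
   ((Real.exp ε + Δ) / (Real.exp ε + 1), (1 - Δ) / (Real.exp ε + 1)),
   ((1 - Δ) / (Real.exp ε + 1), (Real.exp ε + Δ) / (Real.exp ε + 1))}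

/-- The privacy cost objective `f(p, p'; γ)`. -/
noncomputable def privCost (K : ℕ) (m ε : ℝ) (γ : ℕ → ℝ) (p p' : Fin K → ℝ) : ℝ :=
  (∑ l ∈ Finset.range ((K + 1) / 2),
      (Real.exp (m * ε) * alphaPB K p' l - alphaPB K p l) * γ l)
  + ∑ l ∈ Finset.Icc ((K + 1) / 2) K,
      (alphaPB K p l - Real.exp (m * ε) * alphaPB K p' l) * γ l

lemma alpha_affine (K : ℕ) (p : Fin K → ℝ) (i : Fin K) (l : ℕ) :
    ∃ c d : ℝ, ∀ t, alphaPB K (Function.update p i t) l = c + d * t := by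
  classical
  refine ⟨∑ A ∈ powersetCard l (univ : Finset (Fin K)),
      if i ∈ A then 0 else (∏ j ∈ A, p j) * ∏ j ∈ Aᶜ \ {i}, (1 - p j),
    ∑ A ∈ powersetCard l (univ : Finset (Fin K)),
      if i ∈ A then (∏ j ∈ A \ {i}, p j) * ∏ j ∈ Aᶜ, (1 - p j)
      else -((∏ j ∈ A, p j) * ∏ j ∈ Aᶜ \ {i}, (1 - p j)), ?_⟩
  intro t
  unfold alphaPB
  rw [Finset.sum_mul, ← Finset.sum_add_distrib]
  apply Finset.sum_congr rfl
  intro A _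
  by_cases hiA : i ∈ A
  · rw [Finset.prod_update_of_mem hiA]
    have h2 : ∏ j ∈ Aᶜ, (1 - Function.update p i t j) = ∏ j ∈ Aᶜ, (1 - p j) := by
      refine Finset.prod_congr rfl fun j hj => ?_
      rw [Function.update_of_ne (by simp at hj; exact fun h => hj (h ▸ hiA))]
    rw [h2]
    simp only [if_pos hiA]
    ring
  · have hiAc : i ∈ Aᶜ := by simpa using hiA
    have h1 : ∏ j ∈ A, Function.update p i t j = ∏ j ∈ A, p j := by
      refine Finset.prod_congr rfl fun j hj => ?_
      exact Function.update_of_ne (by rintro rfl; exact hiA hj) _ _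
    have h2 : ∏ j ∈ Aᶜ, (1 - Function.update p i t j)
        = (1 - t) * ∏ j ∈ Aᶜ \ {i}, (1 - p j) := by
      have : ∀ j ∈ Aᶜ, (1 - Function.update p i t j)
          = Function.update (fun j => 1 - p j) i (1 - t) j := by
        intro j _
        by_cases hj : j = i
        · subst hj; simp
        · rw [Function.update_of_ne hj, Function.update_of_ne hj]
      rw [Finset.prod_congr rfl this, Finset.prod_update_of_mem hiAc]
    rw [h1, h2]
    simp only [if_neg hiA]
    ring

lemma feas_swap {ε Δ x y : ℝ} (h : Feas ε Δ x y) : Feas ε Δ y x := by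
  obtain ⟨h1,h2,h3,h4,h5,h6,h7,h8⟩ := h
  exact ⟨h3,h4,h1,h2,h6,h5,h8,h7⟩

lemma corners_swap {ε Δ u v : ℝ} (h : (u,v) ∈ Corners ε Δ) : (v,u) ∈ Corners ε Δ := by
  simp only [Corners, Set.mem_insert_iff, Set.mem_singleton_iff, Prod.mk.injEq] at h ⊢
  tauto

-- case a ≥ 0, b ≤ 0
lemma corner_max_pos_neg (ε Δ : ℝ) (hε : 0 ≤ ε) (hΔ0 : 0 ≤ Δ) (hΔ1 : Δ < 1)
    (a b x y : ℝ) (ha : 0 ≤ a) (hb : b ≤ 0) (hF : Feas ε Δ x y) :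
    ∃ u v : ℝ, (u, v) ∈ Corners ε Δ ∧ a * x + b * y ≤ a * u + b * v := by
  obtain ⟨hx0, hx1, hy0, hy1, h5, h6, h7, h8⟩ := hF
  set E := Real.exp ε with hEdef
  have hE : 1 ≤ E := Real.one_le_exp hε
  rcases le_or_gt 0 (a + b * E) with hab | hab
  · -- vertex (1, 1-Δ)
    refine ⟨1, 1 - Δ, by simp [Corners], ?_⟩
    nlinarith [mul_nonneg hab (sub_nonneg.2 hx1),
      mul_nonneg (neg_nonneg.2 hb) (sub_nonneg.2 h8)]
  · rcases le_or_gt 0 (a * E + b) with hab2 | hab2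
    · -- vertex ((E+Δ)/(E+1), (1-Δ)/(E+1))
      refine ⟨(E + Δ)/(E + 1), (1 - Δ)/(E + 1), by simp [Corners, hEdef], ?_⟩
      have hE1 : (0:ℝ) < E + 1 := by linarith
      have hrhs : a * ((E + Δ)/(E + 1)) + b * ((1 - Δ)/(E + 1))
          = (a * (E + Δ) + b * (1 - Δ)) / (E + 1) := by ring
      rw [hrhs, le_div_iff₀ hE1]
      rcases eq_or_lt_of_le hE with hE1' | hE1'
      · -- E = 1
        have hab3 : a + b = 0 := by nlinarith
        nlinarith [mul_nonneg ha (sub_nonneg.2 h5)]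
      · have key : (E - 1) * ((a * x + b * y) * (E + 1))
            ≤ (E - 1) * (a * (E + Δ) + b * (1 - Δ)) := by
          nlinarith [mul_nonneg (neg_nonneg.2 hab.le) (sub_nonneg.2 h5),
            mul_nonneg hab2 (sub_nonneg.2 h8)]
        have hpos : (0:ℝ) < E - 1 := by linarith
        exact le_of_mul_le_mul_left key hpos
    · -- vertex (Δ, 0)
      refine ⟨Δ, 0, by simp [Corners], ?_⟩
      nlinarith [mul_nonneg ha (sub_nonneg.2 h5),
        mul_nonpos_of_nonpos_of_nonneg hab2.le hy0]

lemma corner_max (ε Δ : ℝ) (hε : 0 ≤ ε) (hΔ0 : 0 ≤ Δ) (hΔ1 : Δ < 1)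
    (a b x y : ℝ) (hF : Feas ε Δ x y) :
    ∃ u v : ℝ, (u, v) ∈ Corners ε Δ ∧ a * x + b * y ≤ a * u + b * v := by
  obtain ⟨hx0, hx1, hy0, hy1, h5, h6, h7, h8⟩ := hF
  rcases le_or_gt 0 a with ha | ha
  · rcases le_or_gt 0 b with hb | hb
    · exact ⟨1, 1, by simp [Corners], by nlinarith⟩
    · exact corner_max_pos_neg ε Δ hε hΔ0 hΔ1 a b x y ha hb.le
        ⟨hx0, hx1, hy0, hy1, h5, h6, h7, h8⟩
  · rcases le_or_gt 0 b with hb | hb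
    · obtain ⟨u, v, hmem, hineq⟩ := corner_max_pos_neg ε Δ hε hΔ0 hΔ1 b a y x hb ha.le
        (feas_swap ⟨hx0, hx1, hy0, hy1, h5, h6, h7, h8⟩)
      exact ⟨v, u, corners_swap hmem, by linarith⟩
    · exact ⟨0, 0, by simp [Corners], by nlinarith⟩

lemma corners_feas {ε Δ u v : ℝ} (hε : 0 ≤ ε) (hΔ0 : 0 ≤ Δ) (hΔ1 : Δ < 1)
    (h : (u, v) ∈ Corners ε Δ) : Feas ε Δ u v := by
  have hE : 1 ≤ Real.exp ε := Real.one_le_exp hε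
  set E := Real.exp ε with hEdef
  have hE1 : (0:ℝ) < E + 1 := by linarith
  simp only [Corners, Set.mem_insert_iff, Set.mem_singleton_iff, Prod.mk.injEq] at h
  unfold Feas
  rw [← hEdef]
  rcases h with ⟨rfl,rfl⟩|⟨rfl,rfl⟩|⟨rfl,rfl⟩|⟨rfl,rfl⟩|⟨rfl,rfl⟩|⟨rfl,rfl⟩|⟨rfl,rfl⟩|⟨rfl,rfl⟩
  · refine ⟨le_refl 0, by norm_num, le_refl 0, by norm_num, ?_, ?_, ?_, ?_⟩ <;> nlinarith
  · refine ⟨by norm_num, le_refl 1, by norm_num, le_refl 1, ?_, ?_, ?_, ?_⟩ <;> nlinarith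
  · refine ⟨le_refl 0, by norm_num, hΔ0, hΔ1.le, ?_, ?_, ?_, ?_⟩ <;> nlinarith
  · refine ⟨hΔ0, hΔ1.le, le_refl 0, by norm_num, ?_, ?_, ?_, ?_⟩ <;> nlinarith
  · refine ⟨by linarith, by linarith, by norm_num, le_refl 1, ?_, ?_, ?_, ?_⟩ <;> nlinarith
  · refine ⟨by norm_num, le_refl 1, by linarith, by linarith, ?_, ?_, ?_, ?_⟩ <;> nlinarith
  · have h1 : (E + Δ) / (E + 1) * (E + 1) = E + Δ := div_mul_cancel₀ _ (ne_of_gt hE1)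
    have h2 : (1 - Δ) / (E + 1) * (E + 1) = 1 - Δ := div_mul_cancel₀ _ (ne_of_gt hE1)
    refine ⟨?_, ?_, ?_, ?_, ?_, ?_, ?_, ?_⟩ <;> nlinarith
  · have h1 : (E + Δ) / (E + 1) * (E + 1) = E + Δ := div_mul_cancel₀ _ (ne_of_gt hE1)
    have h2 : (1 - Δ) / (E + 1) * (E + 1) = 1 - Δ := div_mul_cancel₀ _ (ne_of_gt hE1)
    refine ⟨?_, ?_, ?_, ?_, ?_, ?_, ?_, ?_⟩ <;> nlinarith

lemma sum_affine (s : Finset ℕ) (f g h : ℕ → ℝ) (x y : ℝ) :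
    ∑ l ∈ s, (f l + g l * x + h l * y)
      = (∑ l ∈ s, f l) + (∑ l ∈ s, g l) * x + (∑ l ∈ s, h l) * y := by
  simp [Finset.sum_add_distrib, Finset.sum_mul]

lemma privCost_affine (K : ℕ) (m ε : ℝ) (γ : ℕ → ℝ) (p p' : Fin K → ℝ) (i : Fin K) :
    ∃ a b c : ℝ, ∀ x y,
      privCost K m ε γ (Function.update p i x) (Function.update p' i y)
        = a + b * x + c * y := by
  choose cp dp hp using fun l => alpha_affine K p i l
  choose cq dq hq using fun l => alpha_affine K p' i l
  set E := Real.exp (m * ε) with hEdef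
  refine ⟨((∑ l ∈ Finset.range ((K + 1) / 2), (E * cq l - cp l) * γ l)
            + ∑ l ∈ Finset.Icc ((K + 1) / 2) K, (cp l - E * cq l) * γ l),
    ((∑ l ∈ Finset.range ((K + 1) / 2), -(dp l * γ l))
            + ∑ l ∈ Finset.Icc ((K + 1) / 2) K, dp l * γ l),
    ((∑ l ∈ Finset.range ((K + 1) / 2), E * dq l * γ l)
            + ∑ l ∈ Finset.Icc ((K + 1) / 2) K, -(E * dq l * γ l)), ?_⟩
  intro x y
  unfold privCost
  rw [← hEdef]
  have e1 : ∀ l, (E * alphaPB K (Function.update p' i y) l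
        - alphaPB K (Function.update p i x) l) * γ l
      = (E * cq l - cp l) * γ l + (-(dp l * γ l)) * x + (E * dq l * γ l) * y := by
    intro l; rw [hp l x, hq l y]; ring
  have e2 : ∀ l, (alphaPB K (Function.update p i x) l
        - E * alphaPB K (Function.update p' i y) l) * γ l
      = (cp l - E * cq l) * γ l + (dp l * γ l) * x + (-(E * dq l * γ l)) * y := by
    intro l; rw [hp l x, hq l y]; ring
  rw [Finset.sum_congr rfl fun l _ => e1 l, Finset.sum_congr rfl fun l _ => e2 l,
    sum_affine, sum_affine]
  ring

lemma step (K : ℕ) (m ε Δ : ℝ) (hε : 0 ≤ ε) (hΔ0 : 0 ≤ Δ) (hΔ1 : Δ < 1)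
    (γ : ℕ → ℝ) (p p' : Fin K → ℝ) (hF : ∀ j, Feas ε Δ (p j) (p' j)) (i : Fin K) :
    ∃ q q' : Fin K → ℝ, (∀ j, Feas ε Δ (q j) (q' j)) ∧ (q i, q' i) ∈ Corners ε Δ ∧
      (∀ j, j ≠ i → q j = p j ∧ q' j = p' j) ∧
      privCost K m ε γ p p' ≤ privCost K m ε γ q q' := by
  obtain ⟨a, b, c, hf⟩ := privCost_affine K m ε γ p p' i
  obtain ⟨u, v, hmem, hineq⟩ := corner_max ε Δ hε hΔ0 hΔ1 b c (p i) (p' i) (hF i)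
  refine ⟨Function.update p i u, Function.update p' i v, ?_, ?_, ?_, ?_⟩
  · intro j
    by_cases hj : j = i
    · subst hj; simp only [Function.update_self]
      exact corners_feas hε hΔ0 hΔ1 hmem
    · rw [Function.update_of_ne hj, Function.update_of_ne hj]; exact hF j
  · simp only [Function.update_self]; exact hmem
  · intro j hj; rw [Function.update_of_ne hj, Function.update_of_ne hj]; exact ⟨rfl, rfl⟩
  · have h0 : privCost K m ε γ p p' = a + b * p i + c * p' i := by
      have := hf (p i) (p' i)
      rwa [Function.update_eq_self, Function.update_eq_self] at this
    rw [h0, hf u v]; linarith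

/-- the maximum of the privacy cost objective over the product of
feasible regions is attained at a point where every coordinate pair lies among
the eight corner points of `F(ε,Δ)`. -/
theorem statement6 (K : ℕ) (hK : Odd K) (hKpos : 0 < K)
    (ε Δ m : ℝ) (hε : 0 ≤ ε) (hΔ0 : 0 ≤ Δ) (hΔ1 : Δ < 1) (hm : 0 ≤ m)
    (γ : ℕ → ℝ) (hγ01 : ∀ l ≤ K, 0 ≤ γ l ∧ γ l ≤ 1) :
    ∀ p p' : Fin K → ℝ, (∀ i, Feas ε Δ (p i) (p' i)) →
      ∃ q q' : Fin K → ℝ,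
        (∀ i, 0 ≤ q i ∧ q i ≤ 1) ∧ (∀ i, 0 ≤ q' i ∧ q' i ≤ 1) ∧
        (∀ i, (q i, q' i) ∈ Corners ε Δ) ∧
        privCost K m ε γ p p' ≤ privCost K m ε γ q q' := by
  intro p p' hF
  classical
  have main : ∀ s : Finset (Fin K),
      ∃ q q' : Fin K → ℝ, (∀ j, Feas ε Δ (q j) (q' j)) ∧
        (∀ j ∈ s, (q j, q' j) ∈ Corners ε Δ) ∧
        privCost K m ε γ p p' ≤ privCost K m ε γ q q' := by
    intro s
    induction s using Finset.induction_on with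
    | empty => exact ⟨p, p', hF, by simp, le_refl _⟩
    | @insert i s hi IH =>
      obtain ⟨q, q', hqF, hqC, hqle⟩ := IH
      obtain ⟨r, r', hrF, hrC, hrold, hrle⟩ := step K m ε Δ hε hΔ0 hΔ1 γ q q' hqF i
      refine ⟨r, r', hrF, ?_, le_trans hqle hrle⟩
      intro j hj
      rcases Finset.mem_insert.1 hj with rfl | hj
      · exact hrC
      · have hne : j ≠ i := fun h => hi (h ▸ hj)
        obtain ⟨e1, e2⟩ := hrold j hne
        rw [e1, e2]; exact hqC j hj
  obtain ⟨q, q', hqF, hqC, hle⟩ := main Finset.univ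
  refine ⟨q, q', fun i => ⟨(hqF i).1, (hqF i).2.1⟩,
    fun i => ⟨(hqF i).2.2.1, (hqF i).2.2.2.1⟩,
    fun i => hqC i (Finset.mem_univ i), hle⟩
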